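/- Suppose λ ∈ R^d is a vector whose coordinates take at most two consecutive integer values. Then there exist unique integers l and a with −d/2 ≤ l < d/2 such that λ is, up to a permutation of coordinates, equal to [1^l, 0^{d−|l|}] + (a/n)·j, where n = d − k is fixed, and [1^l, 0^{d−|l|}] for negative l denotes the vector with |l| entries equal to −1 and d−|l| entries equal to 0. -/
import Mathlib

/-- The vector `[1^l, 0^{d-|l|}] + (a/n)·j`: for `l ≥ 0` it has `l` entries `1`,
for `l < 0` it has `|l|` entries `-1`, the rest `0`, shifted by `a/n` in each entry. -/
noncomputable def stmt5vec (d : ℕ) (n : ℕ) (l a : ℤ) : Fin d → ℝ :=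
  fun i => (if (i : ℕ) < l.natAbs then (if 0 ≤ l then 1 else -1) else 0) + (a : ℝ) / n

lemma card_filter_val_lt (d t : ℕ) (h : t ≤ d) :
    (Finset.univ.filter (fun i : Fin d => (i : ℕ) < t)).card = t := by
  have he : (Finset.univ.filter (fun i : Fin d => (i : ℕ) < t))
      = (Finset.range t).attachFin (fun m hm => lt_of_lt_of_le (Finset.mem_range.mp hm) h) := by
    ext i; simp [Finset.mem_attachFin]
  rw [he, Finset.card_attachFin, Finset.card_range]

lemma exists_perm_iff {d : ℕ} (p q : Fin d → Prop) [DecidablePred p] [DecidablePred q]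
    (h : (Finset.univ.filter p).card = (Finset.univ.filter q).card) :
    ∃ σ : Equiv.Perm (Fin d), ∀ i, q (σ i) ↔ p i := by
  have h1 : Fintype.card {i // p i} = Fintype.card {i // q i} := by
    simpa [Fintype.card_subtype] using h
  have h2 : Fintype.card {i // ¬ p i} = Fintype.card {i // ¬ q i} := by
    rw [Fintype.card_subtype_compl, Fintype.card_subtype_compl, h1]
  refine ⟨Equiv.subtypeCongr (Fintype.equivOfCardEq h1) (Fintype.equivOfCardEq h2),
    fun i => ?_⟩
  by_cases hp : p i
  · have : Equiv.subtypeCongr (Fintype.equivOfCardEq h1) (Fintype.equivOfCardEq h2) i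
        = ((Fintype.equivOfCardEq h1) ⟨i, hp⟩ : Fin d) := by
      simp [Equiv.subtypeCongr, hp]
    rw [this]
    simpa [hp] using ((Fintype.equivOfCardEq h1) ⟨i, hp⟩).2
  · have : Equiv.subtypeCongr (Fintype.equivOfCardEq h1) (Fintype.equivOfCardEq h2) i
        = ((Fintype.equivOfCardEq h2) ⟨i, hp⟩ : Fin d) := by
      simp [Equiv.subtypeCongr, hp]
    rw [this]
    simpa [hp] using ((Fintype.equivOfCardEq h2) ⟨i, hp⟩).2

/-- A vector in `ℝ^d` whose coordinates take at most two consecutive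
integer values is, up to permutation of coordinates, uniquely of the form
`[1^l, 0^{d-|l|}] + (a/n)·j` with `-d/2 ≤ l < d/2`, `l, a ∈ ℤ`. -/
theorem stmt5 (d k : ℕ) (hd : 1 ≤ d) (n : ℕ) (hn : n = d - k) (hn1 : 1 ≤ n)
    (lam : Fin d → ℝ) (b : ℤ) (hlam : ∀ i, lam i = b ∨ lam i = b + 1) :
    ∃! p : ℤ × ℤ,
      (-(d : ℝ) / 2 ≤ p.1 ∧ (p.1 : ℝ) < (d : ℝ) / 2) ∧
      ∃ σ : Equiv.Perm (Fin d), lam ∘ σ = stmt5vec d n p.1 p.2 := by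
  classical
  have hd0 : 0 < d := hd
  have hdR : (1:ℝ) ≤ d := by exact_mod_cast hd
  have hnR : (n:ℝ) ≠ 0 := Nat.cast_ne_zero.mpr (by omega)
  have hbne : (b:ℝ) + 1 ≠ b := by norm_num
  set m := (Finset.univ.filter (fun i => lam i = (b:ℝ) + 1)).card with hm
  have hmd : m ≤ d := by
    calc m ≤ Finset.univ.card := Finset.card_filter_le _ _
    _ = d := by simp
  have hmb : (Finset.univ.filter (fun i => lam i = (b:ℝ))).card = d - m := by
    have hsum := Finset.card_filter_add_card_filter_not
      (s := (Finset.univ : Finset (Fin d))) (p := fun i => lam i = (b:ℝ) + 1)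
    have heq : (Finset.univ.filter (fun i => ¬ lam i = (b:ℝ) + 1))
        = Finset.univ.filter (fun i => lam i = (b:ℝ)) := by
      apply Finset.filter_congr; intro i _
      rcases hlam i with h | h <;> simp [h, hbne]
    rw [heq] at hsum
    simp only [Finset.card_univ, Fintype.card_fin] at hsum
    omega
  have hna : ∀ c : ℤ, ((n * c : ℤ) : ℝ) / n = c := by
    intro c; push_cast; field_simp
  -- the key classification of all admissible pairs
  have key : ∀ l a : ℤ, (-(d:ℝ)/2 ≤ l) → ((l:ℝ) < (d:ℝ)/2) →
      (∃ σ : Equiv.Perm (Fin d), lam ∘ σ = stmt5vec d n l a) →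
      (2*m < d ∧ l = m ∧ a = n*b) ∨ (d ≤ 2*m ∧ l = (m:ℤ) - d ∧ a = n*(b+1)) := by
    intro l a hb1 hb2 ⟨σ, hσ⟩
    have hσi : ∀ i, lam (σ i) = stmt5vec d n l a i := fun i => congrFun hσ i
    have hnd : l.natAbs < d := by
      have hA : (l:ℝ) < d := by linarith
      have hB : -(d:ℝ) < l := by linarith
      have hA' : l < (d:ℤ) := by exact_mod_cast hA
      have hB' : -(d:ℤ) < l := by exact_mod_cast hB
      omega
    have hmcount : m = (Finset.univ.filter (fun i => stmt5vec d n l a i = (b:ℝ)+1)).card := by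
      rw [hm]
      apply Finset.card_equiv σ.symm
      intro i
      simp only [Finset.mem_filter, Finset.mem_univ, true_and]
      rw [← hσi (σ.symm i), Equiv.apply_symm_apply]
    rcases lt_trichotomy l 0 with hl | hl | hl
    · -- l < 0 : a/n = b + 1
      right
      have hnl : ¬ (0 ≤ l) := not_le.mpr hl
      have hpos : 0 < l.natAbs := Int.natAbs_pos.mpr (ne_of_lt hl)
      have h1 := hσi ⟨0, hd0⟩
      have h2 := hσi ⟨l.natAbs, hnd⟩
      simp only [stmt5vec, hnl, if_false, if_pos hpos, lt_irrefl, if_neg (lt_irrefl l.natAbs),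
        zero_add] at h1 h2
      have han : (a:ℝ)/n = b + 1 := by
        rcases hlam (σ ⟨0, hd0⟩) with h3 | h3 <;> rcases hlam (σ ⟨l.natAbs, hnd⟩) with h4 | h4 <;>
          rw [h3] at h1 <;> rw [h4] at h2 <;> linarith
      have hfeq : (Finset.univ.filter (fun i => stmt5vec d n l a i = (b:ℝ)+1))
          = Finset.univ.filter (fun i : Fin d => ¬ ((i:ℕ) < l.natAbs)) := by
        apply Finset.filter_congr; intro i _
        simp only [stmt5vec, hnl, if_false, han]
        by_cases hi : (i:ℕ) < l.natAbs <;> simp [hi]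
      have hcards := Finset.card_filter_add_card_filter_not
        (s := (Finset.univ : Finset (Fin d))) (p := fun i : Fin d => (i:ℕ) < l.natAbs)
      rw [card_filter_val_lt d l.natAbs (le_of_lt hnd)] at hcards
      simp only [Finset.card_univ, Fintype.card_fin] at hcards
      have hmval : m = d - l.natAbs := by rw [hmcount, hfeq]; omega
      have hlval : l = (m:ℤ) - d := by omega
      refine ⟨?_, hlval, ?_⟩
      · have : -(d:ℝ)/2 ≤ (m:ℝ) - d := by rw [hlval] at hb1; push_cast at hb1 ⊢; linarith
        have : (d:ℝ) ≤ 2*m := by linarith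
        exact_mod_cast this
      · have : (a:ℝ) = n*(b+1) := by field_simp at han; linarith
        exact_mod_cast this
    · -- l = 0 : lam is constant equal to a/n
      subst hl
      have hconst : ∀ j, lam j = (a:ℝ)/n := by
        intro j
        have := hσi (σ.symm j)
        rw [Equiv.apply_symm_apply] at this
        simpa [stmt5vec] using this
      rcases hlam ⟨0, hd0⟩ with h3 | h3 <;> rw [hconst ⟨0, hd0⟩] at h3
      · -- a/n = b, so m = 0
        left
        have hm0 : m = 0 := by
          rw [hm, Finset.card_eq_zero, Finset.filter_eq_empty_iff]
          intro i _
          rw [hconst i, h3]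
          intro h; exact hbne h.symm
        refine ⟨by omega, by omega, ?_⟩
        have : (a:ℝ) = n*b := by field_simp at h3; linarith
        exact_mod_cast this
      · -- a/n = b+1, so m = d
        right
        have hmall : m = d := by
          rw [hm, Finset.filter_true_of_mem (fun i _ => by rw [hconst i, h3])]
          simp
        refine ⟨by omega, by omega, ?_⟩
        have : (a:ℝ) = n*(b+1) := by field_simp at h3; linarith
        exact_mod_cast this
    · -- l > 0 : a/n = b
      left
      have hpl : 0 ≤ l := le_of_lt hl
      have hpos : 0 < l.natAbs := Int.natAbs_pos.mpr (ne_of_gt hl)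
      have h1 := hσi ⟨0, hd0⟩
      have h2 := hσi ⟨l.natAbs, hnd⟩
      simp only [stmt5vec, hpl, if_true, if_pos hpos, if_neg (lt_irrefl l.natAbs),
        zero_add] at h1 h2
      have han : (a:ℝ)/n = b := by
        rcases hlam (σ ⟨0, hd0⟩) with h3 | h3 <;> rcases hlam (σ ⟨l.natAbs, hnd⟩) with h4 | h4 <;>
          rw [h3] at h1 <;> rw [h4] at h2 <;> linarith
      have hfeq : (Finset.univ.filter (fun i => stmt5vec d n l a i = (b:ℝ)+1))
          = Finset.univ.filter (fun i : Fin d => (i:ℕ) < l.natAbs) := by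
        apply Finset.filter_congr; intro i _
        simp only [stmt5vec, hpl, if_true, han]
        by_cases hi : (i:ℕ) < l.natAbs
        · rw [if_pos hi]; simp only [hi, iff_true]; ring
        · rw [if_neg hi]; simp only [hi, iff_false, zero_add]
          intro h; exact hbne h.symm
      have hmval : m = l.natAbs := by
        rw [hmcount, hfeq, card_filter_val_lt d l.natAbs (le_of_lt hnd)]
      have hlval : l = (m:ℤ) := by omega
      refine ⟨?_, hlval, ?_⟩
      · have : (m:ℝ) < (d:ℝ)/2 := by rw [hlval] at hb2; push_cast at hb2 ⊢; linarith
        have : 2*(m:ℝ) < d := by linarith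
        exact_mod_cast this
      · have : (a:ℝ) = n*b := by field_simp at han; linarith
        exact_mod_cast this
  -- existence
  rcases lt_or_ge (2*m) d with hcase | hcase
  · refine ⟨((m:ℤ), n*b), ⟨⟨?_, ?_⟩, ?_⟩, ?_⟩
    · push_cast
      have : (0:ℝ) ≤ m := by positivity
      linarith
    · have : 2*(m:ℝ) < d := by exact_mod_cast hcase
      push_cast
      linarith
    · -- construct the permutation
      obtain ⟨σ, hσ⟩ := exists_perm_iff (fun i : Fin d => (i:ℕ) < m)
        (fun i => lam i = (b:ℝ) + 1)
        (by rw [card_filter_val_lt d m hmd, hm])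
      refine ⟨σ, funext fun i => ?_⟩
      simp only [Function.comp_apply, stmt5vec, Int.natAbs_natCast, Int.ofNat_nonneg, if_true,
        hna b]
      by_cases hi : (i:ℕ) < m
      · rw [if_pos hi, (hσ i).mpr hi]; ring
      · rw [if_neg hi, zero_add]
        rcases hlam (σ i) with h | h
        · exact h
        · exact absurd ((hσ i).mp h) hi
    · rintro ⟨l, a⟩ ⟨⟨hb1, hb2⟩, hex⟩
      rcases key l a hb1 hb2 hex with ⟨_, hl, ha⟩ | ⟨hc, _, _⟩
      · simp [hl, ha]
      · omega
  · refine ⟨((m:ℤ) - d, n*(b+1)), ⟨⟨?_, ?_⟩, ?_⟩, ?_⟩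
    · have : (d:ℝ) ≤ 2*m := by exact_mod_cast hcase
      push_cast
      linarith
    · have : (m:ℝ) ≤ d := by exact_mod_cast hmd
      push_cast
      linarith
    · obtain ⟨σ, hσ⟩ := exists_perm_iff (fun i : Fin d => (i:ℕ) < d - m)
        (fun i => lam i = (b:ℝ))
        (by rw [card_filter_val_lt d (d-m) (by omega), hmb])
      refine ⟨σ, funext fun i => ?_⟩
      have hnat : ((m:ℤ) - d).natAbs = d - m := by omega
      simp only [Function.comp_apply, stmt5vec, hnat, hna (b+1)]
      by_cases hi : (i:ℕ) < d - m
      · have hneg : ¬ (0 ≤ (m:ℤ) - d) := by omega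
        rw [if_pos hi, if_neg hneg, (hσ i).mpr hi]; push_cast; ring
      · rw [if_neg hi, zero_add]
        rcases hlam (σ i) with h | h
        · exact absurd ((hσ i).mp h) hi
        · rw [h]; push_cast; ring
    · rintro ⟨l, a⟩ ⟨⟨hb1, hb2⟩, hex⟩
      rcases key l a hb1 hb2 hex with ⟨hc, _, _⟩ | ⟨_, hl, ha⟩
      · omega
      · simp [hl, ha]
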